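/- arXiv:1302.3840 — 3 statements merged into one kernel-verified Lean document; each statement's English description precedes it below -/
import Mathlib

section
/- Let Q be a subgraph of the n-dimensional hypercube Q_n with q vertices, and let t ≥ 2·C(n, ⌊n/2⌋). Then Q is a subgraph of the t-th power of the path P_q. Equivalently, there is an ordering x_1, ..., x_q of the vertices of Q such that every edge x_i x_j of Q satisfies |i - j| ≤ t. -/
def cubeGraph (n : ℕ) : SimpleGraph (Fin n → Bool) where
  Adj x y := (Finset.univ.filter fun i => x i ≠ y i).card = 1
  symm := by
    constructor
    intro x y hxy
    have h : (Finset.univ.filter fun i => y i ≠ x i)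
        = Finset.univ.filter fun i => x i ≠ y i := by
      apply Finset.filter_congr
      intro i _
      simp [ne_comm]
    rw [h]; exact hxy
  loopless := by
    constructor
    intro x hx
    simp at hx


namespace Stmt1Aux

variable {n : ℕ}

/-- level: number of `true` coordinates -/
def w (x : Fin n → Bool) : ℕ := (Finset.univ.filter fun i => x i = true).card

/-- binary encoding -/
def enc (x : Fin n → Bool) : ℕ :=
  (finFunctionFinEquiv (fun i => finTwoEquiv.symm (x i)) : Fin (2 ^ n))

lemma enc_lt (x : Fin n → Bool) : enc x < 2 ^ n :=
  (finFunctionFinEquiv (fun i => finTwoEquiv.symm (x i))).isLt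

lemma enc_inj : Function.Injective (enc (n := n)) := by
  intro x y h
  have h2 : (fun i => finTwoEquiv.symm (x i)) = (fun i => finTwoEquiv.symm (y i)) := by
    apply finFunctionFinEquiv.injective
    exact Fin.val_injective h
  funext i
  have := congrFun h2 i
  exact finTwoEquiv.symm.injective this

/-- sorting key: level-major, encoding-minor -/
def f (x : Fin n → Bool) : ℕ := w x * 2 ^ n + enc x

lemma f_lt_f {x z : Fin n → Bool} (h : w x < w z) : f x < f z := by
  have h1 : f x < (w x + 1) * 2 ^ n := by
    have := enc_lt x
    simp [f, add_mul]
    omega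
  have h2 : (w x + 1) * 2 ^ n ≤ w z * 2 ^ n :=
    Nat.mul_le_mul_right _ h
  have h3 : w z * 2 ^ n ≤ f z := Nat.le_add_right _ _
  omega

lemma w_le_of_f_le {x z : Fin n → Bool} (h : f x ≤ f z) : w x ≤ w z := by
  by_contra hc
  exact absurd h (not_le.mpr (f_lt_f (not_le.mp hc)))

lemma f_inj : Function.Injective (f (n := n)) := by
  intro x y h
  have hw : w x = w y := le_antisymm (w_le_of_f_le h.le) (w_le_of_f_le h.ge)
  have he : enc x = enc y := by
    simp only [f, hw] at h; omega
  exact enc_inj he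

lemma adj_levels {x y : Fin n → Bool}
    (h : (Finset.univ.filter fun i => x i ≠ y i).card = 1) :
    w x + 1 = w y ∨ w y + 1 = w x := by
  obtain ⟨i0, hi0⟩ := Finset.card_eq_one.mp h
  have hne : x i0 ≠ y i0 := by
    have : i0 ∈ Finset.univ.filter fun i => x i ≠ y i := by
      rw [hi0]; exact Finset.mem_singleton_self i0
    simpa using this
  have heq : ∀ i, i ≠ i0 → x i = y i := by
    intro i hi
    by_contra hc
    have : i ∈ Finset.univ.filter fun j => x j ≠ y j := by simpa using hc
    rw [hi0, Finset.mem_singleton] at this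
    exact hi this
  set A := Finset.univ.filter fun i => x i = true with hA
  set B := Finset.univ.filter fun i => y i = true with hB
  cases hx0 : x i0 with
  | false =>
    have hy0 : y i0 = true := by
      cases hy : y i0 with
      | false => exact absurd (hx0.trans hy.symm) hne
      | true => rfl
    left
    have hBA : B = insert i0 A := by
      ext i
      by_cases hi : i = i0
      · subst hi
        simp [hB, hy0]
      · simp [hA, hB, hi, heq i hi]
    have hi0A : i0 ∉ A := by simp [hA, hx0]
    show A.card + 1 = B.card
    rw [hBA, Finset.card_insert_of_notMem hi0A]
  | true =>
    have hy0 : y i0 = false := by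
      cases hy : y i0 with
      | false => rfl
      | true => exact absurd (hx0.trans hy.symm) hne
    right
    have hAB : A = insert i0 B := by
      ext i
      by_cases hi : i = i0
      · subst hi
        simp [hA, hx0]
      · simp [hA, hB, hi, heq i hi]
    have hi0B : i0 ∉ B := by simp [hB, hy0]
    show B.card + 1 = A.card
    rw [hAB, Finset.card_insert_of_notMem hi0B]

lemma level_count (s : Finset (Fin n → Bool)) (k : ℕ) :
    (s.filter fun z => w z = k).card ≤ n.choose k := by
  have h := Finset.card_le_card_of_injOn
    (f := fun z => Finset.univ.filter fun i => z i = true)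
    (s := s.filter fun z => w z = k)
    (t := Finset.powersetCard k (Finset.univ : Finset (Fin n)))
    (by
      intro z hz
      rw [Finset.mem_coe, Finset.mem_powersetCard_univ]
      exact (Finset.mem_filter.mp (Finset.mem_coe.mp hz)).2)
    (by
      intro z _ z' _ hzz
      funext i
      simp only at hzz
      have : (i ∈ Finset.univ.filter fun j => z j = true) ↔
          (i ∈ Finset.univ.filter fun j => z' j = true) := by rw [hzz]
      simp only [Finset.mem_filter, Finset.mem_univ, true_and] at this
      cases hz : z i with
      | false =>
        cases hz' : z' i with
        | false => rfl
        | true => exact absurd (this.mpr hz') (by simp [hz])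
      | true => exact (this.mp hz).symm)
  rwa [Finset.card_powersetCard, Finset.card_univ, Fintype.card_fin] at h

end Stmt1Aux

/-- Any subgraph `Q` of the hypercube `Q_n` with vertex set `s` of
size `q` embeds in the `t`-th power of the path `P_q`, whenever
`t ≥ 2·C(n, ⌊n/2⌋)`: there is an ordering of the vertices such that every edge
joins vertices at distance at most `t` in the order. -/
theorem stmt1 (n q t : ℕ) (ht : 2 * Nat.choose n (n / 2) ≤ t)
    (s : Finset (Fin n → Bool)) (hq : s.card = q)
    (Q : SimpleGraph (Fin n → Bool)) (hQ : Q ≤ cubeGraph n)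
    (hQs : ∀ x y, Q.Adj x y → x ∈ s ∧ y ∈ s) :
    ∃ e : {x // x ∈ s} ≃ Fin q,
      ∀ (x y : {x // x ∈ s}), Q.Adj x y → |(e x : ℤ) - (e y : ℤ)| ≤ (t : ℤ) := by
  classical
  set T : Finset ℕ := s.image Stmt1Aux.f with hT
  have hTcard : T.card = q := by
    rw [hT, Finset.card_image_of_injective _ Stmt1Aux.f_inj, hq]
  set e0 : Fin q ≃o {x // x ∈ T} := T.orderIsoOfFin hTcard with he0
  set F : {x // x ∈ s} → Fin q :=
    fun x => e0.symm ⟨Stmt1Aux.f x, Finset.mem_image_of_mem _ x.2⟩ with hFdef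
  have hF : ∀ x : {x // x ∈ s}, ((e0 (F x) : ℕ)) = Stmt1Aux.f x.1 := by
    intro x
    simp [hFdef]
  have hFinj : Function.Injective F := by
    intro x y h
    have h2 := congrArg (fun k => ((e0 k : ℕ))) h
    simp only [hF] at h2
    exact Subtype.ext (Stmt1Aux.f_inj h2)
  have hcard : Fintype.card {x // x ∈ s} = Fintype.card (Fin q) := by
    simp [Fintype.card_coe, hq]
  have hFbij : Function.Bijective F :=
    (Fintype.bijective_iff_injective_and_card F).mpr ⟨hFinj, hcard⟩
  set e : {x // x ∈ s} ≃ Fin q := Equiv.ofBijective F hFbij with he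
  have heF : ∀ x, e x = F x := fun x => rfl
  have hvert : ∀ k : Fin q, Stmt1Aux.f ((e.symm k : {x // x ∈ s}) : Fin n → Bool)
      = (e0 k : ℕ) := by
    intro k
    have h1 : F (e.symm k) = k := e.apply_symm_apply k
    rw [← hF (e.symm k), h1]
  refine ⟨e, ?_⟩
  have key : ∀ x y : {x // x ∈ s}, Stmt1Aux.w x.1 + 1 = Stmt1Aux.w y.1 →
      ((e x : ℕ) ≤ (e y : ℕ) ∧ (e y : ℕ) + 1 - (e x : ℕ) ≤ t) := by
    intro x y hw
    have hflt : Stmt1Aux.f x.1 < Stmt1Aux.f y.1 := Stmt1Aux.f_lt_f (by omega)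
    have hab : e x < e y := by
      have h2 : ((e0 (e x) : ℕ)) < ((e0 (e y) : ℕ)) := by
        rw [heF x, heF y, hF, hF]; exact hflt
      exact e0.lt_iff_lt.mp (Subtype.coe_lt_coe.mp h2)
    set a : ℕ := (e x : ℕ) with hadef
    set b : ℕ := (e y : ℕ) with hbdef
    have hab' : a < b := hab
    have hbq : b < q := (e y).isLt
    set S2 : Finset (Fin n → Bool) :=
      s.filter (fun z => Stmt1Aux.w z = Stmt1Aux.w x.1 ∨ Stmt1Aux.w z = Stmt1Aux.w x.1 + 1)
      with hS2
    have hIcc : (Finset.Icc a b).card ≤ S2.card := by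
      apply Finset.card_le_card_of_injOn
        (f := fun m => if h : m < q then ((e.symm ⟨m, h⟩ : {x // x ∈ s}) : Fin n → Bool)
          else x.1)
      · intro m hm
        rw [Finset.mem_coe, Finset.mem_Icc] at hm
        have hmq : m < q := lt_of_le_of_lt hm.2 hbq
        simp only [Finset.mem_coe]
        rw [dif_pos hmq]
        rw [hS2, Finset.mem_filter]
        refine ⟨(e.symm ⟨m, hmq⟩).2, ?_⟩
        have h1 : Stmt1Aux.f x.1 ≤ Stmt1Aux.f ((e.symm ⟨m, hmq⟩ : {x // x ∈ s}) : Fin n → Bool) := by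
          rw [hvert]
          have : (e0 (e x) : ℕ) ≤ (e0 ⟨m, hmq⟩ : ℕ) := by
            have h2 : e x ≤ (⟨m, hmq⟩ : Fin q) := hm.1
            exact e0.monotone h2
          rw [heF, hF] at this
          exact this
        have h2 : Stmt1Aux.f ((e.symm ⟨m, hmq⟩ : {x // x ∈ s}) : Fin n → Bool)
            ≤ Stmt1Aux.f y.1 := by
          rw [hvert]
          have h3 : (⟨m, hmq⟩ : Fin q) ≤ e y := hm.2
          have h4 : ((e0 ⟨m, hmq⟩ : ℕ)) ≤ ((e0 (e y) : ℕ)) :=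
            Subtype.coe_le_coe.mpr (e0.monotone h3)
          rw [heF y, hF] at h4
          exact h4
        have hw1 := Stmt1Aux.w_le_of_f_le h1
        have hw2 := Stmt1Aux.w_le_of_f_le h2
        omega
      · intro m hm m' hm' hmm
        rw [Finset.coe_Icc, Set.mem_Icc] at hm hm'
        have hmq : m < q := lt_of_le_of_lt hm.2 hbq
        have hmq' : m' < q := lt_of_le_of_lt hm'.2 hbq
        simp only at hmm
        rw [dif_pos hmq, dif_pos hmq'] at hmm
        have h5 := e.symm.injective (Subtype.ext hmm)
        simpa using congrArg Fin.val h5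
    have hScard : S2.card ≤ 2 * Nat.choose n (n / 2) := by
      have hsplit : S2 ⊆ (s.filter fun z => Stmt1Aux.w z = Stmt1Aux.w x.1)
          ∪ (s.filter fun z => Stmt1Aux.w z = Stmt1Aux.w x.1 + 1) := by
        rw [hS2, ← Finset.filter_or]
      have h1 := Stmt1Aux.level_count s (Stmt1Aux.w x.1)
      have h2 := Stmt1Aux.level_count s (Stmt1Aux.w x.1 + 1)
      have h3 := Nat.choose_le_middle (Stmt1Aux.w x.1) n
      have h4 := Nat.choose_le_middle (Stmt1Aux.w x.1 + 1) n
      have h5 := le_trans (Finset.card_le_card hsplit) (Finset.card_union_le _ _)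
      omega
    rw [Nat.card_Icc] at hIcc
    omega
  intro x y hadj
  have hcube : (Finset.univ.filter fun i => x.1 i ≠ y.1 i).card = 1 := hQ hadj
  rcases Stmt1Aux.adj_levels hcube with hw | hw
  · obtain ⟨h1, h2⟩ := key x y hw
    rw [abs_le]
    constructor <;> push_cast <;> omega
  · obtain ⟨h1, h2⟩ := key y x hw
    rw [abs_le]
    constructor <;> push_cast <;> omega
end

section
/- Let s be a positive integer with s ≥ 2·C(n, ⌊n/2⌋), and let G be a graph whose vertex set is a disjoint union A ∪ B with |A| = |B| = 2^{n-1}, such that G[A] and G[B] are complete, and there exist X ⊆ A and Y ⊆ B with |X| = |Y| = s such that all edges between X and Y are present in G. Then G contains the n-dimensional hypercube Q_n as a subgraph. -/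
namespace Stmt3Aux

def wt {n : ℕ} (x : Fin n → Bool) : ℕ := (Finset.univ.filter fun i => x i = true).card

lemma wt_le {n : ℕ} (x : Fin n → Bool) : wt x ≤ n := by
  have := Finset.card_filter_le (Finset.univ : Finset (Fin n)) (fun i => x i = true)
  simpa [wt] using this

lemma wt_compl {n : ℕ} (x : Fin n → Bool) : wt (fun i => !x i) = n - wt x := by
  have h : (Finset.univ.filter fun i => (!x i) = true)
      = (Finset.univ.filter fun i => x i = true)ᶜ := by
    ext i; simp
  rw [wt, h, Finset.card_compl]
  simp [wt]

lemma wt_adj {n : ℕ} {x y : Fin n → Bool}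
    (h : (Finset.univ.filter fun i => x i ≠ y i).card = 1) : wt x ≤ wt y + 1 := by
  have hsub : (Finset.univ.filter fun i => x i = true)
      ⊆ (Finset.univ.filter fun i => y i = true) ∪ (Finset.univ.filter fun i => x i ≠ y i) := by
    intro i hi
    simp only [Finset.mem_filter, Finset.mem_union, Finset.mem_univ, true_and] at hi ⊢
    by_cases hy : y i = true
    · exact Or.inl hy
    · right; intro he; exact hy (he ▸ hi)
  simp only [wt]
  calc (Finset.univ.filter fun i => x i = true).card ≤ _ := Finset.card_le_card hsub
    _ ≤ (Finset.univ.filter fun i => y i = true).card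
        + (Finset.univ.filter fun i => x i ≠ y i).card := Finset.card_union_le _ _
    _ = (Finset.univ.filter fun i => y i = true).card + 1 := by rw [h]

lemma level_card_le (n k : ℕ) :
    (Finset.univ.filter fun x : Fin n → Bool => wt x = k).card ≤ Nat.choose n k := by
  have h := Finset.card_le_card_of_injOn
    (s := Finset.univ.filter fun x : Fin n → Bool => wt x = k)
    (t := Finset.powersetCard k Finset.univ)
    (fun x => Finset.univ.filter fun i => x i = true) ?_ ?_
  · simpa using h
  · intro x hx
    simp only [Finset.mem_coe, Finset.mem_filter, Finset.mem_univ, true_and] at hx ⊢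
    rw [Finset.mem_powersetCard]
    exact ⟨Finset.subset_univ _, hx⟩
  · intro x _ y _ he
    replace he : (Finset.univ.filter fun i => x i = true)
        = (Finset.univ.filter fun i => y i = true) := he
    funext i
    have hiff : (x i = true) ↔ (y i = true) := by
      constructor <;> intro hh
      · have h1 : i ∈ Finset.univ.filter fun j => x j = true := by simp [hh]
        rw [he] at h1; simpa using h1
      · have h1 : i ∈ Finset.univ.filter fun j => y j = true := by simp [hh]
        rw [← he] at h1; simpa using h1
    cases hx : x i <;> cases hy : y i <;> simp_all

def Aside (m : ℕ) : Finset (Fin (m+1) → Bool) :=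
  Finset.univ.filter fun x => 2 * wt x < m + 1 ∨ (2 * wt x = m + 1 ∧ x 0 = false)

lemma mem_Aside_compl (m : ℕ) (x : Fin (m+1) → Bool) :
    x ∈ Aside m ↔ (fun i => !x i) ∉ Aside m := by
  have hw := wt_le x
  have hc := wt_compl x
  simp only [Aside, Finset.mem_filter, Finset.mem_univ, true_and, hc]
  cases hx : x 0 <;> simp [hx] <;> omega

lemma Aside_card (m : ℕ) : (Aside m).card = 2 ^ m := by
  have hbij : (Aside m).card = ((Aside m)ᶜ).card := by
    apply Finset.card_bij' (fun x _ => fun i => !x i) (fun x _ => fun i => !x i)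
    · intro x hx
      exact Finset.mem_compl.mpr ((mem_Aside_compl m x).mp hx)
    · intro x hx
      have hxx : (fun i => !(fun j => !x j) i) = x := by funext i; simp
      have := (mem_Aside_compl m (fun i => !x i))
      rw [hxx] at this
      exact this.mpr (Finset.mem_compl.mp hx)
    · intro x _; funext i; simp
    · intro x _; funext i; simp
  have htot := Finset.card_add_card_compl (Aside m)
  have hcard : Fintype.card (Fin (m+1) → Bool) = 2 ^ (m+1) := by simp
  have hpow : (2:ℕ) ^ (m+1) = 2 ^ m * 2 := pow_succ 2 m
  omega

def bdA (m : ℕ) : Finset (Fin (m+1) → Bool) :=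
  (Aside m).filter fun x => m + 1 ≤ 2 * wt x + 2

def bdB (m : ℕ) : Finset (Fin (m+1) → Bool) :=
  ((Aside m)ᶜ).filter fun x => 2 * wt x ≤ m + 3

lemma bdA_card (m : ℕ) : (bdA m).card ≤ 2 * Nat.choose (m+1) ((m+1)/2) := by
  have hsub : bdA m ⊆ (Finset.univ.filter fun x : Fin (m+1) → Bool => wt x = m / 2)
      ∪ (Finset.univ.filter fun x : Fin (m+1) → Bool => wt x = (m+1)/2) := by
    intro x hx
    simp only [bdA, Aside, Finset.mem_filter, Finset.mem_univ, true_and] at hx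
    have h1 : 2 * wt x ≤ m + 1 := by rcases hx.1 with h | h; omega; omega
    have h2 : m + 1 ≤ 2 * wt x + 2 := hx.2
    simp only [Finset.mem_union, Finset.mem_filter, Finset.mem_univ, true_and]
    omega
  refine le_trans (Finset.card_le_card hsub) (le_trans (Finset.card_union_le _ _) ?_)
  have h1 := level_card_le (m+1) (m/2)
  have h2 := level_card_le (m+1) ((m+1)/2)
  have h3 := Nat.choose_le_middle (m/2) (m+1)
  have h4 := Nat.choose_le_middle ((m+1)/2) (m+1)
  omega

lemma bdB_card (m : ℕ) : (bdB m).card ≤ 2 * Nat.choose (m+1) ((m+1)/2) := by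
  have hsub : bdB m ⊆ (Finset.univ.filter fun x : Fin (m+1) → Bool => wt x = (m+2)/2)
      ∪ (Finset.univ.filter fun x : Fin (m+1) → Bool => wt x = (m+3)/2) := by
    intro x hx
    simp only [bdB, Finset.mem_filter, Finset.mem_compl, Aside, Finset.mem_univ, true_and] at hx
    push_neg at hx
    have h1 : m + 1 ≤ 2 * wt x := hx.1.1
    have h2 : 2 * wt x ≤ m + 3 := hx.2
    simp only [Finset.mem_union, Finset.mem_filter, Finset.mem_univ, true_and]
    omega
  refine le_trans (Finset.card_le_card hsub) (le_trans (Finset.card_union_le _ _) ?_)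
  have h1 := level_card_le (m+1) ((m+2)/2)
  have h2 := level_card_le (m+1) ((m+3)/2)
  have h3 := Nat.choose_le_middle ((m+2)/2) (m+1)
  have h4 := Nat.choose_le_middle ((m+3)/2) (m+1)
  omega

lemma exists_injOn_to {α β : Type*} [DecidableEq α] (s : Finset α) (t : Finset β)
    (h : s.card ≤ t.card) (b0 : β) :
    ∃ f : α → β, Set.InjOn f ↑s ∧ ∀ x ∈ s, f x ∈ t := by
  obtain ⟨t', ht's, ht'⟩ := Finset.exists_subset_card_eq h
  have e : {x // x ∈ s} ≃ {x // x ∈ t'} := Finset.equivOfCardEq ht'.symm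
  refine ⟨fun a => if ha : a ∈ s then (e ⟨a, ha⟩ : β) else b0, ?_, ?_⟩
  · intro a ha b hb hfe
    rw [Finset.mem_coe] at ha hb
    simp only [dif_pos ha, dif_pos hb] at hfe
    have := e.injective (Subtype.ext hfe)
    exact congrArg Subtype.val this
  · intro a ha
    simp only [dif_pos ha]
    exact ht's (e ⟨a, ha⟩).2

end Stmt3Aux

/-- If `G` consists of two disjoint cliques `A`, `B` of size
`2^{n-1}` joined by a complete bipartite graph `K_{s,s}` with
`s ≥ 2·C(n,⌊n/2⌋)`, then `G` contains the hypercube `Q_n`. -/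
theorem stmt3 {V : Type*} [Fintype V] [DecidableEq V] (n s : ℕ)
    (hs : 2 * Nat.choose n (n / 2) ≤ s)
    (G : SimpleGraph V) (A B : Finset V)
    (hdisj : Disjoint A B) (hunion : A ∪ B = Finset.univ)
    (hA : A.card = 2 ^ (n - 1)) (hB : B.card = 2 ^ (n - 1))
    (hAclique : G.IsClique (A : Set V)) (hBclique : G.IsClique (B : Set V))
    (X Y : Finset V) (hXA : X ⊆ A) (hYB : Y ⊆ B)
    (hX : X.card = s) (hY : Y.card = s)
    (hXY : ∀ x ∈ X, ∀ y ∈ Y, G.Adj x y) :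
    ∃ f : (Fin n → Bool) → V, Function.Injective f ∧
      ∀ x y, (cubeGraph n).Adj x y → G.Adj (f x) (f y) := by
  classical
  rcases n with _ | m
  · have hA1 : A.card = 1 := by simpa using hA
    obtain ⟨a, ha⟩ := Finset.card_pos.mp (by omega : 0 < A.card)
    refine ⟨fun _ => a, ?_, ?_⟩
    · intro x y _; funext i; exact i.elim0
    · intro x y hadj
      exfalso
      have h1 : (Finset.univ.filter fun i : Fin 0 => x i ≠ y i).card = 1 := hadj
      simp at h1
  · have hA' : A.card = 2 ^ m := by simpa using hA
    have hB' : B.card = 2 ^ m := by simpa using hB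
    obtain ⟨v0, hv0⟩ : A.Nonempty := Finset.card_pos.mp (by rw [hA']; positivity)
    have hsA : s ≤ A.card := by rw [← hX]; exact Finset.card_le_card hXA
    have hsB : s ≤ B.card := by rw [← hY]; exact Finset.card_le_card hYB
    have hbdAs : (Stmt3Aux.bdA m).card ≤ s := le_trans (Stmt3Aux.bdA_card m) hs
    have hbdBs : (Stmt3Aux.bdB m).card ≤ s := le_trans (Stmt3Aux.bdB_card m) hs
    have hAsc := Stmt3Aux.Aside_card m
    have hBsc : ((Stmt3Aux.Aside m)ᶜ).card = 2 ^ m := by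
      have htot := Finset.card_add_card_compl (Stmt3Aux.Aside m)
      have hcard : Fintype.card (Fin (m+1) → Bool) = 2 ^ (m+1) := by simp
      have hpow : (2:ℕ) ^ (m+1) = 2 ^ m * 2 := pow_succ 2 m
      omega
    have hbdAsub : Stmt3Aux.bdA m ⊆ Stmt3Aux.Aside m := Finset.filter_subset _ _
    have hbdBsub : Stmt3Aux.bdB m ⊆ (Stmt3Aux.Aside m)ᶜ := Finset.filter_subset _ _
    -- injections
    obtain ⟨f1, hf1inj, hf1mem⟩ := Stmt3Aux.exists_injOn_to (Stmt3Aux.bdA m) X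
      (by rw [hX]; exact hbdAs) v0
    set imgA := (Stmt3Aux.bdA m).image f1 with himgA
    have himgAcard : imgA.card = (Stmt3Aux.bdA m).card := Finset.card_image_of_injOn hf1inj
    have himgAX : imgA ⊆ X := by
      intro v hv; obtain ⟨x, hx, rfl⟩ := Finset.mem_image.mp hv; exact hf1mem x hx
    have hcard2 : (Stmt3Aux.Aside m \ Stmt3Aux.bdA m).card ≤ (A \ imgA).card := by
      rw [Finset.card_sdiff_of_subset hbdAsub, Finset.card_sdiff_of_subset (himgAX.trans hXA), hAsc, hA', himgAcard]
    obtain ⟨f2, hf2inj, hf2mem⟩ := Stmt3Aux.exists_injOn_to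
      (Stmt3Aux.Aside m \ Stmt3Aux.bdA m) (A \ imgA) hcard2 v0
    obtain ⟨f3, hf3inj, hf3mem⟩ := Stmt3Aux.exists_injOn_to (Stmt3Aux.bdB m) Y
      (by rw [hY]; exact hbdBs) v0
    set imgB := (Stmt3Aux.bdB m).image f3 with himgB
    have himgBcard : imgB.card = (Stmt3Aux.bdB m).card := Finset.card_image_of_injOn hf3inj
    have himgBY : imgB ⊆ Y := by
      intro v hv; obtain ⟨x, hx, rfl⟩ := Finset.mem_image.mp hv; exact hf3mem x hx
    have hcard4 : ((Stmt3Aux.Aside m)ᶜ \ Stmt3Aux.bdB m).card ≤ (B \ imgB).card := by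
      rw [Finset.card_sdiff_of_subset hbdBsub, Finset.card_sdiff_of_subset (himgBY.trans hYB), hBsc, hB', himgBcard]
    obtain ⟨f4, hf4inj, hf4mem⟩ := Stmt3Aux.exists_injOn_to
      ((Stmt3Aux.Aside m)ᶜ \ Stmt3Aux.bdB m) (B \ imgB) hcard4 v0
    set fA := fun x => if x ∈ Stmt3Aux.bdA m then f1 x else f2 x with hfA
    set fB := fun x => if x ∈ Stmt3Aux.bdB m then f3 x else f4 x with hfB
    set f := fun x => if x ∈ Stmt3Aux.Aside m then fA x else fB x with hf
    -- membership properties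
    have hfAX : ∀ x ∈ Stmt3Aux.bdA m, fA x = f1 x := by
      intro x hx; simp only [hfA, if_pos hx]
    have hfAA : ∀ x ∈ Stmt3Aux.Aside m, fA x ∈ A := by
      intro x hx
      by_cases hb : x ∈ Stmt3Aux.bdA m
      · simp only [hfA, if_pos hb]; exact hXA (hf1mem x hb)
      · simp only [hfA, if_neg hb]
        exact (Finset.mem_sdiff.mp (hf2mem x (Finset.mem_sdiff.mpr ⟨hx, hb⟩))).1
    have hfBY : ∀ x ∈ Stmt3Aux.bdB m, fB x = f3 x := by
      intro x hx; simp only [hfB, if_pos hx]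
    have hfBB : ∀ x ∉ Stmt3Aux.Aside m, fB x ∈ B := by
      intro x hx
      by_cases hb : x ∈ Stmt3Aux.bdB m
      · simp only [hfB, if_pos hb]; exact hYB (hf3mem x hb)
      · simp only [hfB, if_neg hb]
        exact (Finset.mem_sdiff.mp
          (hf4mem x (Finset.mem_sdiff.mpr ⟨Finset.mem_compl.mpr hx, hb⟩))).1
    have hfAinj : ∀ x ∈ Stmt3Aux.Aside m, ∀ y ∈ Stmt3Aux.Aside m, fA x = fA y → x = y := by
      intro x hx y hy he
      by_cases hbx : x ∈ Stmt3Aux.bdA m <;> by_cases hby : y ∈ Stmt3Aux.bdA m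
      · exact hf1inj hbx hby (by simpa only [hfA, if_pos hbx, if_pos hby] using he)
      · exfalso
        have h1 : fA x ∈ imgA := by
          simp only [hfA, if_pos hbx]; exact Finset.mem_image_of_mem f1 hbx
        have h2 : fA y ∈ A \ imgA := by
          simp only [hfA, if_neg hby]; exact hf2mem y (Finset.mem_sdiff.mpr ⟨hy, hby⟩)
        rw [he] at h1
        exact (Finset.mem_sdiff.mp h2).2 h1
      · exfalso
        have h1 : fA y ∈ imgA := by
          simp only [hfA, if_pos hby]; exact Finset.mem_image_of_mem f1 hby
        have h2 : fA x ∈ A \ imgA := by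
          simp only [hfA, if_neg hbx]; exact hf2mem x (Finset.mem_sdiff.mpr ⟨hx, hbx⟩)
        rw [← he] at h1
        exact (Finset.mem_sdiff.mp h2).2 h1
      · exact hf2inj (Finset.mem_sdiff.mpr ⟨hx, hbx⟩) (Finset.mem_sdiff.mpr ⟨hy, hby⟩)
          (by simpa only [hfA, if_neg hbx, if_neg hby] using he)
    have hfBinj : ∀ x ∉ Stmt3Aux.Aside m, ∀ y ∉ Stmt3Aux.Aside m, fB x = fB y → x = y := by
      intro x hx y hy he
      by_cases hbx : x ∈ Stmt3Aux.bdB m <;> by_cases hby : y ∈ Stmt3Aux.bdB m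
      · exact hf3inj hbx hby (by simpa only [hfB, if_pos hbx, if_pos hby] using he)
      · exfalso
        have h1 : fB x ∈ imgB := by
          simp only [hfB, if_pos hbx]; exact Finset.mem_image_of_mem f3 hbx
        have h2 : fB y ∈ B \ imgB := by
          simp only [hfB, if_neg hby]
          exact hf4mem y (Finset.mem_sdiff.mpr ⟨Finset.mem_compl.mpr hy, hby⟩)
        rw [he] at h1
        exact (Finset.mem_sdiff.mp h2).2 h1
      · exfalso
        have h1 : fB y ∈ imgB := by
          simp only [hfB, if_pos hby]; exact Finset.mem_image_of_mem f3 hby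
        have h2 : fB x ∈ B \ imgB := by
          simp only [hfB, if_neg hbx]
          exact hf4mem x (Finset.mem_sdiff.mpr ⟨Finset.mem_compl.mpr hx, hbx⟩)
        rw [← he] at h1
        exact (Finset.mem_sdiff.mp h2).2 h1
      · exact hf4inj (Finset.mem_sdiff.mpr ⟨Finset.mem_compl.mpr hx, hbx⟩)
          (Finset.mem_sdiff.mpr ⟨Finset.mem_compl.mpr hy, hby⟩)
          (by simpa only [hfB, if_neg hbx, if_neg hby] using he)
    have hABne : ∀ a ∈ A, ∀ b ∈ B, a ≠ b := by
      intro a ha b hb he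
      exact Finset.disjoint_left.mp hdisj ha (he ▸ hb)
    have hfinj : Function.Injective f := by
      intro x y he
      by_cases hx : x ∈ Stmt3Aux.Aside m <;> by_cases hy : y ∈ Stmt3Aux.Aside m
      · exact hfAinj x hx y hy (by simpa only [hf, if_pos hx, if_pos hy] using he)
      · exfalso
        have h1 : fA x = fB y := by simpa only [hf, if_pos hx, if_neg hy] using he
        exact hABne _ (hfAA x hx) _ (hfBB y hy) h1
      · exfalso
        have h1 : fB x = fA y := by simpa only [hf, if_neg hx, if_pos hy] using he
        exact hABne _ (hfAA y hy) _ (hfBB x hx) h1.symm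
      · exact hfBinj x hx y hy (by simpa only [hf, if_neg hx, if_neg hy] using he)
    -- cross lemma
    have hcross : ∀ x y : Fin (m+1) → Bool, x ∈ Stmt3Aux.Aside m → y ∉ Stmt3Aux.Aside m →
        (Finset.univ.filter fun i => y i ≠ x i).card = 1 →
        x ∈ Stmt3Aux.bdA m ∧ y ∈ Stmt3Aux.bdB m := by
      intro x y hx hy hadj
      have hwy : Stmt3Aux.wt y ≤ Stmt3Aux.wt x + 1 := Stmt3Aux.wt_adj hadj
      have hx' : 2 * Stmt3Aux.wt x < m + 1 ∨ 2 * Stmt3Aux.wt x = m + 1 := by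
        have := hx
        simp only [Stmt3Aux.Aside, Finset.mem_filter, Finset.mem_univ, true_and] at this
        rcases this with h | h
        · exact Or.inl h
        · exact Or.inr h.1
      have hy' : m + 1 ≤ 2 * Stmt3Aux.wt y := by
        have := hy
        simp only [Stmt3Aux.Aside, Finset.mem_filter, Finset.mem_univ, true_and] at this
        push_neg at this
        exact this.1
      constructor
      · exact Finset.mem_filter.mpr ⟨hx, by omega⟩
      · exact Finset.mem_filter.mpr ⟨Finset.mem_compl.mpr hy, by omega⟩
    refine ⟨f, hfinj, ?_⟩
    intro x y hadj
    have hadjc : (Finset.univ.filter fun i => x i ≠ y i).card = 1 := hadj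
    have hadjc' : (Finset.univ.filter fun i => y i ≠ x i).card = 1 := (cubeGraph (m+1)).adj_symm hadj
    have hxy : x ≠ y := by
      rintro rfl; simp at hadjc
    have hne : f x ≠ f y := fun he => hxy (hfinj he)
    by_cases hx : x ∈ Stmt3Aux.Aside m <;> by_cases hy : y ∈ Stmt3Aux.Aside m
    · have hfa : f x ∈ A := by simp only [hf, if_pos hx]; exact hfAA x hx
      have hfb : f y ∈ A := by simp only [hf, if_pos hy]; exact hfAA y hy
      exact hAclique (Finset.mem_coe.mpr hfa) (Finset.mem_coe.mpr hfb) hne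
    · obtain ⟨hbx, hby⟩ := hcross x y hx hy hadjc'
      have hfa : f x ∈ X := by
        simp only [hf, if_pos hx]; rw [hfAX x hbx]; exact hf1mem x hbx
      have hfb : f y ∈ Y := by
        simp only [hf, if_neg hy]; rw [hfBY y hby]; exact hf3mem y hby
      exact hXY _ hfa _ hfb
    · obtain ⟨hby, hbx⟩ := hcross y x hy hx hadjc
      have hfa : f x ∈ Y := by
        simp only [hf, if_neg hx]; rw [hfBY x hbx]; exact hf3mem x hbx
      have hfb : f y ∈ X := by
        simp only [hf, if_pos hy]; rw [hfAX y hby]; exact hf1mem y hby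
      exact (hXY _ hfb _ hfa).symm
    · have hfa : f x ∈ B := by simp only [hf, if_neg hx]; exact hfBB x hx
      have hfb : f y ∈ B := by simp only [hf, if_neg hy]; exact hfBB y hy
      exact hBclique (Finset.mem_coe.mpr hfa) (Finset.mem_coe.mpr hfb) hne
end

section
/- Let A be a finite set of vertices in a two-coloured complete graph, and let S_1, ..., S_m be disjoint vertex sets such that every vertex of each S_i has at most 2^{n-a} blue neighbours in A and |S_i| ≤ 2^{n-d_i+1}. For an index set I ⊆ [m] with |I| ≤ b, define A(i) = { v ∈ A : |N_B(v) ∩ S_i| ≥ (γ/d_i)·2^{n-d_i} } for each i ∈ I, where 1 ≤ d_i ≤ b for all i. Then |∪_{i∈I} A(i)| ≤ (b²/γ)·2^{n-a+1}. -/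
/-- Double-counting bound on the union of the high-blue-degree
sets `A(i) = {v ∈ A : |N_B(v) ∩ S_i| ≥ (γ/d_i)·2^{n-d_i}}`. -/
theorem stmt10 {V : Type*} [Fintype V] [DecidableEq V] (B : SimpleGraph V)
    [DecidableRel B.Adj] (γ : ℝ) (hγ : 0 < γ) (n a b m : ℕ)
    (ha : 1 ≤ a) (hb : 1 ≤ b) (han : a ≤ n)
    (A : Finset V) (S : Fin m → Finset V)
    (hSdisj : ∀ i j, i ≠ j → Disjoint (S i) (S j))
    (d : Fin m → ℕ) (hd1 : ∀ i, 1 ≤ d i) (hdb : ∀ i, d i ≤ b) (hdn : ∀ i, d i ≤ n)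
    (hdeg : ∀ i, ∀ v ∈ S i, ((A.filter fun w => B.Adj v w).card : ℝ) ≤ 2 ^ (n - a))
    (hScard : ∀ i, ((S i).card : ℝ) ≤ 2 ^ (n - d i + 1))
    (I : Finset (Fin m)) (hI : I.card ≤ b) :
    (((I.biUnion fun i => A.filter fun v =>
        (γ / d i) * 2 ^ (n - d i) ≤ ((S i).filter fun w => B.Adj v w).card).card : ℝ))
      ≤ (b ^ 2 / γ) * 2 ^ (n - a + 1) := by
  have key : ∀ i : Fin m,
      (((A.filter fun v =>
        (γ / d i) * 2 ^ (n - d i) ≤ (((S i).filter fun w => B.Adj v w).card : ℝ)).card : ℝ))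
        ≤ (b / γ) * 2 ^ (n - a + 1) := by
    intro i
    set T := A.filter fun v =>
        (γ / d i) * 2 ^ (n - d i) ≤ (((S i).filter fun w => B.Adj v w).card : ℝ) with hT
    have hdpos : (0 : ℝ) < d i := by exact_mod_cast hd1 i
    -- lower bound on the edge count
    have hlow : (T.card : ℝ) * ((γ / d i) * 2 ^ (n - d i))
        ≤ ∑ v ∈ T, (((S i).filter fun w => B.Adj v w).card : ℝ) := by
      rw [Finset.card_eq_sum_ones, Nat.cast_sum]
      rw [Finset.sum_mul]
      apply Finset.sum_le_sum
      intro v hv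
      have := (Finset.mem_filter.mp hv).2
      simpa using this
    -- swap the double sum
    have hswap : ∑ v ∈ T, (((S i).filter fun w => B.Adj v w).card : ℝ)
        = ∑ w ∈ S i, ((T.filter fun v => B.Adj v w).card : ℝ) := by
      simp only [Finset.card_filter]
      push_cast
      rw [Finset.sum_comm]
    -- upper bound on the edge count
    have hup : ∑ w ∈ S i, ((T.filter fun v => B.Adj v w).card : ℝ)
        ≤ ((S i).card : ℝ) * 2 ^ (n - a) := by
      calc ∑ w ∈ S i, ((T.filter fun v => B.Adj v w).card : ℝ)
          ≤ ∑ _w ∈ S i, (2:ℝ) ^ (n - a) := by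
            refine Finset.sum_le_sum fun w hw => ?_
            refine le_trans ?_ (hdeg i w hw)
            have hsub : (T.filter fun v => B.Adj v w) ⊆ A.filter fun x => B.Adj w x := by
              intro v hv
              simp only [Finset.mem_filter] at hv ⊢
              exact ⟨(Finset.mem_filter.mp hv.1).1, hv.2.symm⟩
            exact_mod_cast Finset.card_le_card hsub
        _ = ((S i).card : ℝ) * 2 ^ (n - a) := by rw [Finset.sum_const, nsmul_eq_mul]
    have hS := hScard i
    have h2 : (T.card : ℝ) * ((γ / d i) * 2 ^ (n - d i))
        ≤ 2 ^ (n - d i + 1) * 2 ^ (n - a) := by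
      calc (T.card : ℝ) * ((γ / d i) * 2 ^ (n - d i))
          ≤ ∑ w ∈ S i, ((T.filter fun v => B.Adj v w).card : ℝ) := hswap ▸ hlow
        _ ≤ ((S i).card : ℝ) * 2 ^ (n - a) := hup
        _ ≤ 2 ^ (n - d i + 1) * 2 ^ (n - a) := by
            apply mul_le_mul_of_nonneg_right hS (by positivity)
    have h3 : (T.card : ℝ) ≤ (d i / γ) * 2 ^ (n - a + 1) := by
      have hpow : (0 : ℝ) < 2 ^ (n - d i) := by positivity
      rw [div_mul_eq_mul_div, le_div_iff₀ hγ]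
      have h2' : (T.card : ℝ) * γ * 2 ^ (n - d i)
          ≤ (d i : ℝ) * 2 ^ (n - a + 1) * 2 ^ (n - d i) := by
        calc (T.card : ℝ) * γ * 2 ^ (n - d i)
            = (d i : ℝ) * ((T.card : ℝ) * (γ / d i * 2 ^ (n - d i))) := by
              field_simp
          _ ≤ (d i : ℝ) * (2 ^ (n - d i + 1) * 2 ^ (n - a)) :=
              mul_le_mul_of_nonneg_left h2 hdpos.le
          _ = (d i : ℝ) * 2 ^ (n - a + 1) * 2 ^ (n - d i) := by
              rw [pow_succ, pow_succ]; ring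
      exact le_of_mul_le_mul_right h2' hpow
    refine h3.trans ?_
    gcongr
    exact_mod_cast hdb i
  calc (((I.biUnion fun i => A.filter fun v =>
        (γ / d i) * 2 ^ (n - d i) ≤ ((S i).filter fun w => B.Adj v w).card).card : ℝ))
      ≤ ∑ i ∈ I, (((A.filter fun v =>
        (γ / d i) * 2 ^ (n - d i) ≤ (((S i).filter fun w => B.Adj v w).card : ℝ)).card : ℝ)) := by
        exact_mod_cast Finset.card_biUnion_le
    _ ≤ ∑ _i ∈ I, (b / γ) * 2 ^ (n - a + 1) := Finset.sum_le_sum fun i _ => key i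
    _ = (I.card : ℝ) * ((b / γ) * 2 ^ (n - a + 1)) := by rw [Finset.sum_const]; ring
    _ ≤ (b : ℝ) * ((b / γ) * 2 ^ (n - a + 1)) := by
        have : (I.card : ℝ) ≤ b := by exact_mod_cast hI
        apply mul_le_mul_of_nonneg_right this (by positivity)
    _ = (b ^ 2 / γ) * 2 ^ (n - a + 1) := by ring
end
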